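/- Let (Q^S, Q^H) be bivariate standard normal with correlation θ ∈ (0,1). Then for all real thresholds τ^S, τ^H: P(Q^S > τ^S | Q^H > τ^H) > P(Q^S > τ^S | Q^H = τ^H), i.e., Φ̄₂(τ^S, τ^H; θ)/Φ̄(τ^H) > Φ̄((τ^S − θτ^H)/√(1−θ²)). -/
import Mathlib


open Real MeasureTheory Set Matrix

/-- standard normal density -/
noncomputable def phi (x : ℝ) : ℝ := Real.exp (-x^2/2) / Real.sqrt (2*Real.pi)

/-- standard normal CDF -/
noncomputable def Phi (x : ℝ) : ℝ := ∫ t in Set.Iic x, phi t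

/-- standard normal survival function -/
noncomputable def PhiBar (x : ℝ) : ℝ := ∫ t in Set.Ioi x, phi t

/-- standard bivariate normal density with correlation ρ -/
noncomputable def phi2 (x y ρ : ℝ) : ℝ :=
  Real.exp (-(x^2 - 2*ρ*x*y + y^2)/(2*(1-ρ^2))) / (2*Real.pi*Real.sqrt (1-ρ^2))

/-- standard bivariate normal CDF with correlation ρ -/
noncomputable def Phi2 (a b ρ : ℝ) : ℝ := ∫ x in Set.Iic a, ∫ y in Set.Iic b, phi2 x y ρ

/-- standard bivariate normal joint survival function with correlation ρ -/
noncomputable def PhiBar2 (a b ρ : ℝ) : ℝ := ∫ x in Set.Ioi a, ∫ y in Set.Ioi b, phi2 x y ρ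

/-- covariance matrix of (Q, Q^S, Q^H) -/
noncomputable def covM (θS θH θ : ℝ) : Matrix (Fin 3) (Fin 3) ℝ :=
  !![1, θS, θH; θS, 1, θ; θH, θ, 1]

/-- trivariate normal density of (Q, Q^S, Q^H) with zero means, unit variances and
correlations θS = Corr(Q,Q^S), θH = Corr(Q,Q^H), θ = Corr(Q^S,Q^H) -/
noncomputable def pdf3 (θS θH θ : ℝ) (v : Fin 3 → ℝ) : ℝ :=
  Real.exp (-(v ⬝ᵥ ((covM θS θH θ)⁻¹ *ᵥ v))/2) /
    Real.sqrt ((2*Real.pi)^3 * (covM θS θH θ).det)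

/- ### Auxiliary lemmas -/

lemma phi_pos (x : ℝ) : 0 < phi x :=
  div_pos (Real.exp_pos _) (Real.sqrt_pos.2 (by positivity))

lemma phi_cont : Continuous phi := by
  unfold phi; fun_prop

lemma phi_integrable : Integrable phi := by
  have h : Integrable (fun x : ℝ => Real.exp (-(1/2) * x^2)) := integrable_exp_neg_mul_sq (by norm_num)
  have := h.div_const (Real.sqrt (2*Real.pi))
  convert this using 2 with x
  unfold phi; ring_nf

lemma integral_phi : ∫ x, phi x = 1 := by
  have e : ∀ x : ℝ, -x^2/2 = -(1/2)*x^2 := fun x => by ring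
  simp_rw [phi, e, integral_div, integral_gaussian]
  rw [show Real.pi / (1/2) = 2 * Real.pi by ring, div_self]
  exact (Real.sqrt_pos.2 (by positivity)).ne'

lemma phiBar_nonneg (x : ℝ) : 0 ≤ PhiBar x :=
  setIntegral_nonneg measurableSet_Ioi fun t _ => (phi_pos t).le

lemma phiBar_le_one (x : ℝ) : PhiBar x ≤ 1 := by
  rw [← integral_phi]
  exact setIntegral_le_integral phi_integrable (ae_of_all _ fun t => (phi_pos t).le)

lemma setIntegral_phi_pos {s : Set ℝ} (hvol : 0 < volume s)
    (hfin : IntegrableOn phi s) : 0 < ∫ t in s, phi t := by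
  rw [setIntegral_pos_iff_support_of_nonneg_ae (ae_of_all _ fun t => (phi_pos t).le) hfin]
  exact lt_of_lt_of_le hvol (measure_mono fun y hy => ⟨(phi_pos y).ne', hy⟩)

lemma phiBar_pos (x : ℝ) : 0 < PhiBar x :=
  setIntegral_phi_pos (by simp [Real.volume_Ioi]) phi_integrable.integrableOn

lemma phiBar_lt {a b : ℝ} (h : a < b) : PhiBar b < PhiBar a := by
  have hd : Disjoint (Ioc a b) (Ioi b) := by
    simp only [Set.disjoint_left, mem_Ioc, mem_Ioi]
    intro x hx h3
    linarith [hx.2]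
  have hsplit : PhiBar a = (∫ t in Ioc a b, phi t) + PhiBar b := by
    rw [PhiBar, PhiBar, ← setIntegral_union hd measurableSet_Ioi
      phi_integrable.integrableOn phi_integrable.integrableOn, Ioc_union_Ioi_eq_Ioi h.le]
  have hpos : 0 < ∫ t in Ioc a b, phi t :=
    setIntegral_phi_pos
      (by rw [Real.volume_Ioc]; exact ENNReal.ofReal_pos.2 (by linarith)) phi_integrable.integrableOn
  linarith

lemma phiBar_antitone : Antitone PhiBar := fun a b h => by
  rcases eq_or_lt_of_le h with rfl | h'
  · exact le_refl _
  · exact (phiBar_lt h').le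

lemma phiBar_measurable : Measurable PhiBar := phiBar_antitone.measurable

lemma integral_Ioi_comp_add_right (g : ℝ → ℝ) (a c : ℝ) :
    ∫ x in Ioi a, g (x + c) = ∫ x in Ioi (a + c), g x := by
  rw [← integral_indicator measurableSet_Ioi, ← integral_indicator measurableSet_Ioi,
    ← integral_add_right_eq_self (fun x => (Ioi (a+c)).indicator g x) c]
  congr 1; ext x
  have hiff : a < x ↔ a + c < x + c := by constructor <;> intro <;> linarith
  by_cases h : a < x
  · simp [indicator, mem_Ioi, h, hiff.mp h]
  · simp [indicator, mem_Ioi, h, fun hh => h (hiff.mpr hh)]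

lemma integral_Ioi_phi_affine {σ : ℝ} (hσ : 0 < σ) (a c : ℝ) :
    ∫ x in Ioi a, phi ((x - c)/σ) = σ * PhiBar ((a - c)/σ) := by
  have h1 : ∫ x in Ioi a, phi ((x - c)/σ) = ∫ x in Ioi (a + -c), phi (x * σ⁻¹) := by
    rw [← integral_Ioi_comp_add_right (fun x => phi (x * σ⁻¹)) a (-c)]
    simp [div_eq_mul_inv, sub_eq_add_neg]
  rw [h1, integral_comp_mul_right_Ioi (fun x => phi x) _ (inv_pos.2 hσ)]
  simp [PhiBar, smul_eq_mul, sub_eq_add_neg, div_eq_mul_inv]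

lemma phi2_factor {θ : ℝ} (hθ : θ ∈ Set.Ioo (0:ℝ) 1) (x y : ℝ) :
    phi2 x y θ = phi y * (phi ((x - θ*y)/Real.sqrt (1-θ^2)) / Real.sqrt (1-θ^2)) := by
  have hs : (0:ℝ) < 1 - θ^2 := by nlinarith [hθ.1, hθ.2]
  have hσ : 0 < Real.sqrt (1-θ^2) := Real.sqrt_pos.2 hs
  have hσ2 : Real.sqrt (1-θ^2)^2 = 1-θ^2 := Real.sq_sqrt hs.le
  have h2π : Real.sqrt (2*Real.pi)^2 = 2*Real.pi := Real.sq_sqrt (by positivity)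
  have hπ : (0:ℝ) < Real.sqrt (2*Real.pi) := Real.sqrt_pos.2 (by positivity)
  have key : -(x^2 - 2*θ*x*y + y^2)/(2*(1-θ^2))
      = -y^2/2 + -((x - θ*y)/Real.sqrt (1-θ^2))^2/2 := by
    rw [div_pow, hσ2]
    field_simp
    ring
  unfold phi2 phi
  rw [key, Real.exp_add]
  conv_rhs => rw [div_div, div_mul_div_comm]
  congr 1
  rw [← mul_assoc, ← sq, h2π]

lemma phi2_integrable {θ : ℝ} (hθ : θ ∈ Set.Ioo (0:ℝ) 1) :
    Integrable (fun p : ℝ × ℝ => phi2 p.1 p.2 θ) := by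
  have hs : (0:ℝ) < 1 - θ^2 := by nlinarith [hθ.1, hθ.2]
  have hσ : 0 < Real.sqrt (1-θ^2) := Real.sqrt_pos.2 hs
  have ha : (0:ℝ) < 1/(2*(1+θ)) := by have := hθ.1; positivity
  have hg : Integrable (fun p : ℝ × ℝ =>
      (Real.exp (-(1/(2*(1+θ)))*p.1^2) * Real.exp (-(1/(2*(1+θ)))*p.2^2)) / (2*Real.pi*Real.sqrt (1-θ^2))) :=
    ((integrable_exp_neg_mul_sq ha).mul_prod (integrable_exp_neg_mul_sq ha)).div_const _
  refine hg.mono' ?_ (ae_of_all _ fun p => ?_)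
  · apply Continuous.aestronglyMeasurable
    unfold phi2
    fun_prop
  · have h1 : (1-θ)*(p.1^2+p.2^2) ≤ p.1^2 - 2*θ*p.1*p.2 + p.2^2 := by
      nlinarith [sq_nonneg (p.1-p.2), hθ.1]
    have hexp : -(p.1^2 - 2*θ*p.1*p.2 + p.2^2)/(2*(1-θ^2))
        ≤ -(1/(2*(1+θ)))*p.1^2 + -(1/(2*(1+θ)))*p.2^2 := by
      have heq : -((1-θ)*(p.1^2+p.2^2))/(2*(1-θ^2))
          = -(1/(2*(1+θ)))*p.1^2 + -(1/(2*(1+θ)))*p.2^2 := by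
        have h1θ : (1:ℝ) + θ ≠ 0 := by nlinarith [hθ.1]
        have h2θ : (1:ℝ) - θ ≠ 0 := by nlinarith [hθ.2]
        field_simp
        ring
      rw [← heq]
      exact (div_le_div_iff_of_pos_right (by positivity)).2 (by linarith)
    have hφpos : 0 < phi2 p.1 p.2 θ := div_pos (Real.exp_pos _) (by positivity)
    rw [Real.norm_eq_abs, abs_of_pos hφpos]
    unfold phi2
    rw [← Real.exp_add]
    exact (div_le_div_iff_of_pos_right (by positivity)).2 (Real.exp_le_exp.2 hexp)

/-- P(Q^S > τ^S | Q^H > τ^H) > P(Q^S > τ^S | Q^H = τ^H) for a bivariate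
standard normal pair with correlation θ ∈ (0,1). -/
theorem tail_cond_gt_point_cond (θ τS τH : ℝ) (hθ : θ ∈ Set.Ioo (0 : ℝ) 1) :
    PhiBar2 τS τH θ / PhiBar τH > PhiBar ((τS - θ*τH) / Real.sqrt (1 - θ^2)) := by
  have hs : (0:ℝ) < 1 - θ^2 := by nlinarith [hθ.1, hθ.2]
  have hσ : 0 < Real.sqrt (1-θ^2) := Real.sqrt_pos.2 hs
  -- Fubini
  have hswap : PhiBar2 τS τH θ = ∫ y in Ioi τH, ∫ x in Ioi τS, phi2 x y θ := by
    rw [PhiBar2]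
    exact integral_integral_swap
      (by rw [Measure.prod_restrict]; exact (phi2_integrable hθ).restrict)
  -- inner integral
  have hinner : ∀ y : ℝ, ∫ x in Ioi τS, phi2 x y θ
      = phi y * PhiBar ((τS - θ*y)/Real.sqrt (1-θ^2)) := by
    intro y
    simp_rw [phi2_factor hθ]
    rw [MeasureTheory.integral_const_mul, integral_div, integral_Ioi_phi_affine hσ τS (θ*y),
      mul_div_cancel_left₀ _ hσ.ne']
  have hF : PhiBar2 τS τH θ
      = ∫ y in Ioi τH, phi y * PhiBar ((τS - θ*y)/Real.sqrt (1-θ^2)) := by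
    rw [hswap]
    exact setIntegral_congr_fun measurableSet_Ioi fun y _ => hinner y
  set c := (τS - θ*τH) / Real.sqrt (1-θ^2) with hc
  set F := fun y : ℝ => phi y * PhiBar ((τS - θ*y)/Real.sqrt (1-θ^2)) with hFdef
  set G := fun y : ℝ => PhiBar c * phi y with hGdef
  have hFmeas : AEStronglyMeasurable F (volume.restrict (Ioi τH)) := by
    apply Measurable.aestronglyMeasurable
    exact phi_cont.measurable.mul (phiBar_measurable.comp (by fun_prop))
  have hFint : IntegrableOn F (Ioi τH) := by
    apply Integrable.mono' phi_integrable.integrableOn hFmeas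
    filter_upwards with y
    rw [Real.norm_eq_abs, abs_of_nonneg (mul_nonneg (phi_pos y).le (phiBar_nonneg _))]
    calc phi y * PhiBar ((τS - θ*y)/Real.sqrt (1-θ^2))
        ≤ phi y * 1 := mul_le_mul_of_nonneg_left (phiBar_le_one _) (phi_pos y).le
      _ = phi y := mul_one _
  have hGint : IntegrableOn G (Ioi τH) := (phi_integrable.const_mul _).integrableOn
  have pos : ∀ y ∈ Ioi τH, 0 < F y - G y := by
    intro y hy
    have harg : (τS - θ*y)/Real.sqrt (1-θ^2) < c := by
      rw [hc]
      apply (div_lt_div_iff_of_pos_right hσ).2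
      have : τH < y := hy
      nlinarith [hθ.1]
    have h2 := phiBar_lt harg
    have h3 := phi_pos y
    simp only [hFdef, hGdef]
    nlinarith
  have hkey : 0 < ∫ y in Ioi τH, (F y - G y) := by
    rw [setIntegral_pos_iff_support_of_nonneg_ae
      (((ae_restrict_iff' measurableSet_Ioi).2 (ae_of_all _ fun y hy => (pos y hy).le)))
      (hFint.sub hGint)]
    refine lt_of_lt_of_le ?_ (measure_mono fun y hy => ⟨(pos y hy).ne', hy⟩)
    simp [Real.volume_Ioi]
  rw [integral_sub hFint hGint] at hkey
  have hG : ∫ y in Ioi τH, G y = PhiBar c * PhiBar τH := by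
    rw [hGdef]
    rw [MeasureTheory.integral_const_mul]
    rfl
  rw [gt_iff_lt, lt_div_iff₀ (phiBar_pos τH), hF]
  rw [hG] at hkey
  linarith
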